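/- Let α, β, K, N be natural numbers with α ≥ 1, β ≥ 1 and α + β = K + 1. If N ≥ α(β + 1) − 1, then every testing design feasible for (N, K) has at least αβ tests; that is, T(N, K) ≥ αβ. -/

import Mathlib

/-- The outcome of a cascaded test `t` (a list of items) on a defective set `S`:
the first element of `t` belonging to `S`, or `none` if there is none. -/
def outcome {N : ℕ} (t : List (Fin N)) (S : Finset (Fin N)) : Option (Fin N) :=
  (t.filter (fun x => x ∈ S)).head?

/-- A testing design `𝒯` (an indexed family of tests) is feasible for `(N, K)` if the
map sending each `S ⊆ Fin N` with `|S| ≤ K` to its vector of test outcomes is injective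
on `{S | |S| ≤ K}`. -/
def Feasible (N K : ℕ) {T : ℕ} (𝒯 : Fin T → List (Fin N)) : Prop :=
  Set.InjOn (fun (S : Finset (Fin N)) => fun i : Fin T => outcome (𝒯 i) S)
    {S : Finset (Fin N) | S.card ≤ K}

/-- `TNK N K`: the minimum number of tests over all duplicate-free testing designs
feasible for `(N, K)`. -/
noncomputable def TNK (N K : ℕ) : ℕ :=
  sInf {T : ℕ | ∃ 𝒯 : Fin T → List (Fin N), (∀ i, (𝒯 i).Nodup) ∧ Feasible N K 𝒯}

/-- `fT 𝒯 S v`: the number of tests in the design `𝒯` whose outcome on `S` is `some v`. -/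
def fT {N T : ℕ} (𝒯 : Fin T → List (Fin N)) (S : Finset (Fin N)) (v : Fin N) : ℕ :=
  (Finset.univ.filter (fun i : Fin T => outcome (𝒯 i) S = some v)).card

/-- A design is in systematic form if every test is nonempty and the first element of
each test does not occur in any other test. -/
def Systematic {N T : ℕ} (𝒯 : Fin T → List (Fin N)) : Prop :=
  ∀ i : Fin T, 𝒯 i ≠ [] ∧ ∀ u : Fin N, (𝒯 i).head? = some u → ∀ j : Fin T, j ≠ i → u ∉ 𝒯 j

/-- If `u` is the first `p`-element of `t`, `w` is the first `q`-element, `q u` and `p w`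
hold, then `u = w`. -/
private lemma first_eq {γ : Type*} {p q : γ → Bool} (t : List γ) :
    ∀ {u w : γ}, (t.filter p).head? = some u → (t.filter q).head? = some w →
      q u = true → p w = true → u = w := by
  induction t with
  | nil => intro u w hp _ _ _; simp at hp
  | cons a t ih =>
    intro u w hp hq hqu hpw
    simp only [List.filter_cons] at hp hq
    by_cases hpa : p a = true
    · rw [if_pos hpa, List.head?_cons] at hp
      have hu : u = a := (Option.some.inj hp).symm
      by_cases hqa : q a = true
      · rw [if_pos hqa, List.head?_cons] at hq
        have hw : w = a := (Option.some.inj hq).symm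
        rw [hu, hw]
      · exact absurd (hu ▸ hqu) hqa
    · rw [if_neg hpa] at hp
      by_cases hqa : q a = true
      · rw [if_pos hqa, List.head?_cons] at hq
        have hw : w = a := (Option.some.inj hq).symm
        exact absurd (hw ▸ hpw) hpa
      · rw [if_neg hqa] at hq
        exact ih hp hq hqu hpw

/-- If `x` is not the outcome of `t` on `S`, then removing `x` from `S` does not change
the outcome. -/
private lemma outcome_erase {N : ℕ} (t : List (Fin N)) (S : Finset (Fin N)) (x : Fin N)
    (h : outcome t S ≠ some x) :
    outcome t (S.erase x) = outcome t S := by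
  unfold outcome at *
  induction t with
  | nil => rfl
  | cons a t ih =>
    simp only [List.filter_cons] at h ⊢
    by_cases ha : a ∈ S
    · have hax : a ≠ x := by
        rintro rfl
        rw [if_pos (decide_eq_true ha), List.head?_cons] at h
        exact h rfl
      have ha' : a ∈ S.erase x := Finset.mem_erase.2 ⟨hax, ha⟩
      rw [if_pos (decide_eq_true ha), if_pos (decide_eq_true ha'), List.head?_cons,
        List.head?_cons]
    · have ha' : a ∉ S.erase x := fun hc => ha (Finset.mem_of_mem_erase hc)
      have c2 : ¬(decide (a ∈ S) = true) := by simpa using ha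
      have c1 : ¬(decide (a ∈ S.erase x) = true) := by
        simp only [decide_eq_true_eq]
        exact ha'
      rw [if_neg c1, if_neg c2]
      rw [if_neg c2] at h
      exact ih h

theorem stmt7 (α β K N : ℕ) (hα : 1 ≤ α) (hβ : 1 ≤ β) (hαβ : α + β = K + 1)
    (hN : α * (β + 1) - 1 ≤ N) :
    (∀ (T : ℕ) (𝒯 : Fin T → List (Fin N)),
        (∀ i, (𝒯 i).Nodup) → Feasible N K 𝒯 → α * β ≤ T) ∧
    α * β ≤ TNK N K := by
  classical
  have main : ∀ (T : ℕ) (𝒯 : Fin T → List (Fin N)),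
      (∀ i, (𝒯 i).Nodup) → Feasible N K 𝒯 → α * β ≤ T := by
    intro T 𝒯 _hnd hfeas
    by_contra hT
    push_neg at hT
    -- the set of heads
    set H : Finset (Fin N) :=
      Finset.univ.biUnion (fun i : Fin T => ((𝒯 i).head?).toFinset) with hHdef
    have hHcard : H.card ≤ T := by
      calc H.card ≤ ∑ i : Fin T, ((𝒯 i).head?).toFinset.card := Finset.card_biUnion_le
        _ ≤ ∑ _i : Fin T, 1 := by
            apply Finset.sum_le_sum
            intro i _
            cases (𝒯 i).head? <;> simp
        _ = T := by simp
    have hNbig : α * β + α - 1 ≤ N := by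
      have : α * (β + 1) = α * β + α := by ring
      omega
    -- at least α non-heads
    have hNH : α ≤ (Finset.univ \ H).card := by
      have hcard : (Finset.univ \ H).card = N - H.card := by
        rw [Finset.card_sdiff_of_subset (Finset.subset_univ H), Finset.card_univ, Fintype.card_fin]
      omega
    obtain ⟨X, hXsub, hXcard⟩ := Finset.exists_subset_card_eq hNH
    -- pigeonhole: some x ∈ X is the outcome (on X) of at most β - 1 tests
    have hpigeon : ∃ x ∈ X,
        (Finset.univ.filter (fun i : Fin T => outcome (𝒯 i) X = some x)).card < β := by
      by_contra hall
      push_neg at hall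
      have hdisj : ∀ a ∈ X, ∀ b ∈ X, a ≠ b →
          Disjoint (Finset.univ.filter (fun i : Fin T => outcome (𝒯 i) X = some a))
            (Finset.univ.filter (fun i : Fin T => outcome (𝒯 i) X = some b)) := by
        intro a _ b _ hab
        rw [Finset.disjoint_left]
        intro i hia hib
        simp only [Finset.mem_filter] at hia hib
        exact hab (Option.some.inj (hia.2.symm.trans hib.2))
      have hsum : ∑ x ∈ X,
          (Finset.univ.filter (fun i : Fin T => outcome (𝒯 i) X = some x)).card ≤ T := by
        rw [← Finset.card_biUnion hdisj]
        calc (X.biUnion _).card ≤ (Finset.univ : Finset (Fin T)).card :=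
              Finset.card_le_card (Finset.subset_univ _)
          _ = T := by simp
      have : α * β ≤ T := by
        calc α * β = ∑ _x ∈ X, β := by rw [Finset.sum_const, hXcard, smul_eq_mul, mul_comm]
          _ ≤ _ := Finset.sum_le_sum hall
          _ ≤ T := hsum
      omega
    obtain ⟨x, hxX, hRx⟩ := hpigeon
    set Rx : Finset (Fin T) :=
      Finset.univ.filter (fun i : Fin T => outcome (𝒯 i) X = some x) with hRxdef
    set Z : Finset (Fin N) := Rx.image (fun i => ((𝒯 i).head?).getD x) with hZdef
    set S : Finset (Fin N) := X ∪ Z with hSdef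
    have hxS : x ∈ S := Finset.mem_union_left _ hxX
    have hxnotH : x ∉ H := (Finset.mem_sdiff.1 (hXsub hxX)).2
    have hScard : S.card ≤ K := by
      have h1 : Z.card ≤ Rx.card := Finset.card_image_le
      have h2 : S.card ≤ X.card + Z.card := Finset.card_union_le _ _
      omega
    -- x is never an outcome on S
    have hnever : ∀ i, outcome (𝒯 i) S ≠ some x := by
      intro i hout
      have hxf : x ∈ (𝒯 i).filter (fun y => y ∈ S) :=
        List.mem_of_mem_head? (Option.mem_def.mpr hout)
      have hxt : x ∈ 𝒯 i := (List.mem_filter.1 hxf).1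
      -- the outcome of test i on X exists
      have hfXne : ((𝒯 i).filter (fun y => y ∈ X)).head?.isSome := by
        cases hfil : (𝒯 i).filter (fun y => y ∈ X) with
        | nil =>
          exfalso
          have : x ∈ (𝒯 i).filter (fun y => y ∈ X) :=
            List.mem_filter.2 ⟨hxt, by simpa using hxX⟩
          rw [hfil] at this
          simp at this
        | cons a l => simp [hfil]
      obtain ⟨x', hx'⟩ := Option.isSome_iff_exists.1 hfXne
      have hx'o : outcome (𝒯 i) X = some x' := hx'
      by_cases hxx : x' = x
      · -- i ∈ Rx; then the head of 𝒯 i is in Z ⊆ S and comes first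
        rw [hxx] at hx'o
        have hiR : i ∈ Rx := by
          rw [hRxdef]
          simp [hx'o]
        obtain ⟨a, l, hti⟩ : ∃ a l, 𝒯 i = a :: l := by
          cases hc : 𝒯 i with
          | nil => rw [hc] at hxt; simp at hxt
          | cons a l => exact ⟨a, l, rfl⟩
        have haZ : a ∈ Z := by
          rw [hZdef]
          apply Finset.mem_image.2
          exact ⟨i, hiR, by rw [hti]; rfl⟩
        have haS : a ∈ S := Finset.mem_union_right _ haZ
        have : outcome (𝒯 i) S = some a := by
          rw [hti]
          unfold outcome
          rw [List.filter_cons, if_pos (decide_eq_true haS), List.head?_cons]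
        rw [this] at hout
        have hax : a = x := Option.some.inj hout
        subst hax
        apply hxnotH
        rw [hHdef]
        apply Finset.mem_biUnion.2
        exact ⟨i, Finset.mem_univ i, by rw [hti]; simp⟩
      · -- x' ∈ X, x' ≠ x : x' ∈ S and first_eq gives x = x', contradiction
        have hx'X : x' ∈ X := by
          have : x' ∈ (𝒯 i).filter (fun y => y ∈ X) := List.mem_of_mem_head? (Option.mem_def.mpr hx')
          simpa using (List.mem_filter.1 this).2
        have hx'S : x' ∈ S := Finset.mem_union_left _ hx'X
        have : x = x' := by
          apply first_eq (𝒯 i) hout hx'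
          · simpa using hxX
          · simpa using hx'S
        exact hxx this.symm
    -- confusion between S and S.erase x
    have heq : (fun i => outcome (𝒯 i) S) = (fun i => outcome (𝒯 i) (S.erase x)) := by
      funext i
      exact (outcome_erase _ _ _ (hnever i)).symm
    have hScard' : (S.erase x).card ≤ K :=
      le_trans (Finset.card_le_card (Finset.erase_subset _ _)) hScard
    have : S = S.erase x := hfeas hScard hScard' heq
    exact Finset.notMem_erase x S (this ▸ hxS)
  refine ⟨main, ?_⟩
  apply le_csInf
  · refine ⟨N, fun i => [i], fun i => List.nodup_singleton i, ?_⟩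
    intro S₁ h₁ S₂ h₂ h
    ext v
    have hv := congrFun h v
    simp only [outcome] at hv
    by_cases h1 : v ∈ S₁ <;> by_cases h2 : v ∈ S₂ <;>
      simp [List.filter_cons, h1, h2] at hv ⊢ <;> tauto
  · rintro T ⟨𝒯, hnd, hfeas⟩
    exact main T 𝒯 hnd hfeas
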